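/- arXiv:2006.03551 — 8 statements merged into one kernel-verified Lean document; each statement's English description precedes it below -/
import Mathlib

section
/- Let P be a Poisson algebra over a field 𝔽. If P is strongly solvable with strong derived length n, then the Poisson ideal δ̃₁(P) = {P,P}P is associative nilpotent of index at most 2^n − 1, i.e. every product of 2^n − 1 elements of δ̃₁(P) is zero. -/
/-- A Poisson bracket on a commutative associative unital `F`-algebra `P`:
an `F`-bilinear, alternating bracket satisfying the Jacobi identity and the
Leibniz rule `{a·b, c} = a·{b,c} + b·{a,c}`. -/
structure PoissonBracket (F P : Type*) [Field F] [CommRing P] [Algebra F P] where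
  bracket : P → P → P
  add_left : ∀ a b c : P, bracket (a + b) c = bracket a c + bracket b c
  smul_left : ∀ (r : F) (a b : P), bracket (r • a) b = r • bracket a b
  add_right : ∀ a b c : P, bracket a (b + c) = bracket a b + bracket a c
  smul_right : ∀ (r : F) (a b : P), bracket a (r • b) = r • bracket a b
  alt : ∀ a : P, bracket a a = 0
  jacobi : ∀ a b c : P,
    bracket (bracket a b) c + bracket (bracket b c) a + bracket (bracket c a) b = 0
  leibniz : ∀ a b c : P, bracket (a * b) c = a * bracket b c + b * bracket a c

namespace PoissonBracket

variable {F P : Type*} [Field F] [CommRing P] [Algebra F P]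

/-- `{A, B}`: the `F`-span of all brackets of elements of `A` with elements of `B`. -/
def lieSpan (pb : PoissonBracket F P) (A B : Submodule F P) : Submodule F P :=
  Submodule.span F {z : P | ∃ a ∈ A, ∃ b ∈ B, z = pb.bracket a b}

/-- Upper derived series: `δ̃₀(P) = P`, `δ̃ₙ₊₁(P) = {δ̃ₙ(P), δ̃ₙ(P)}·P`. -/
def udelta (pb : PoissonBracket F P) : ℕ → Submodule F P
  | 0 => ⊤
  | n + 1 => pb.lieSpan (pb.udelta n) (pb.udelta n) * ⊤

/-- Derived series of a Lie ideal `I`: `δ₀(I) = I`, `δₙ₊₁(I) = {δₙ(I), δₙ(I)}`. -/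
def dseries (pb : PoissonBracket F P) (I : Submodule F P) : ℕ → Submodule F P
  | 0 => I
  | n + 1 => pb.lieSpan (pb.dseries I n) (pb.dseries I n)

/-- Lower central series of a Lie ideal `I`, indexed so that `lcs I 1 = γ₁(I) = I`
and `lcs I (n+1) = γₙ₊₁(I) = {γₙ(I), I}` for `n ≥ 1` (index `0` is a dummy equal to `I`). -/
def lcs (pb : PoissonBracket F P) (I : Submodule F P) : ℕ → Submodule F P
  | 0 => I
  | 1 => I
  | n + 2 => pb.lieSpan (pb.lcs I (n + 1)) I

/-- Upper Lie power series: `P⁽¹⁾ = P`, `P⁽ⁿ⁾ = {P⁽ⁿ⁻¹⁾, P}·P` for `n > 1`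
(index `0` is a dummy equal to `P`). -/
def ulps (pb : PoissonBracket F P) : ℕ → Submodule F P
  | 0 => ⊤
  | 1 => ⊤
  | n + 2 => pb.lieSpan (pb.ulps (n + 1)) ⊤ * ⊤

/-- A Poisson ideal: an ideal for the associative product which is also a Lie ideal. -/
def IsPoissonIdeal (pb : PoissonBracket F P) (I : Submodule F P) : Prop :=
  (∀ x ∈ I, ∀ p : P, p * x ∈ I) ∧ (∀ x ∈ I, ∀ p : P, pb.bracket x p ∈ I)

/-- The Poisson ideal generated by a set `S`: the smallest Poisson ideal containing `S`. -/
def poissonSpan (pb : PoissonBracket F P) (S : Set P) : Submodule F P :=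
  sInf {I : Submodule F P | pb.IsPoissonIdeal I ∧ S ⊆ I}


section Aux

variable {F P : Type*} [Field F] [CommRing P] [Algebra F P] (pb : PoissonBracket F P)

/-- Antisymmetry of the bracket, in sum form. -/
lemma bracket_add_antisymm (a b : P) : pb.bracket a b + pb.bracket b a = 0 := by
  have h := pb.alt (a + b)
  rw [pb.add_left, pb.add_right, pb.add_right, pb.alt, pb.alt] at h
  linear_combination h

lemma bracket_mem_lieSpan {A B : Submodule F P} {a b : P} (ha : a ∈ A) (hb : b ∈ B) :
    pb.bracket a b ∈ pb.lieSpan A B :=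
  Submodule.subset_span ⟨a, ha, b, hb, rfl⟩

lemma mem_mulTop {S : Submodule F P} {s : P} (hs : s ∈ S) : s ∈ S * (⊤ : Submodule F P) := by
  simpa using Submodule.mul_mem_mul hs (Submodule.mem_top (x := (1 : P)))

lemma mul_mem_mulTop {S : Submodule F P} {w : P} (hw : w ∈ S * (⊤ : Submodule F P)) (p : P) :
    p * w ∈ S * (⊤ : Submodule F P) := by
  refine Submodule.mul_induction_on hw (fun s hs t _ => ?_) (fun x y hx hy => ?_)
  · have h : p * (s * t) = s * (t * p) := by ring
    rw [h]
    exact Submodule.mul_mem_mul hs Submodule.mem_top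
  · rw [mul_add]
    exact Submodule.add_mem _ hx hy

/-- Key identity 1: for `x, z` in a multiplicatively closed submodule `I`,
`x·{z,b} ∈ {I,I}·P`. -/
lemma key1 {I : Submodule F P} (hI : ∀ x ∈ I, ∀ p : P, x * p ∈ I)
    {x z : P} (hx : x ∈ I) (hz : z ∈ I) (b : P) :
    x * pb.bracket z b ∈ pb.lieSpan I I * (⊤ : Submodule F P) := by
  have hid : x * pb.bracket z b = b * pb.bracket x z - pb.bracket (x * b) z := by
    linear_combination pb.leibniz x b z + x * pb.bracket_add_antisymm z b
  rw [hid]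
  refine Submodule.sub_mem _ ?_ ?_
  · exact mul_mem_mulTop (mem_mulTop (pb.bracket_mem_lieSpan hx hz)) b
  · exact mem_mulTop (pb.bracket_mem_lieSpan (hI x hx b) hz)

/-- Key identity 2: for `x, y` in a multiplicatively closed submodule `I`,
`x·y·{a,b} ∈ {I,I}·P`. -/
lemma key2 {I : Submodule F P} (hI : ∀ x ∈ I, ∀ p : P, x * p ∈ I)
    {x y : P} (hx : x ∈ I) (hy : y ∈ I) (a b : P) :
    x * (y * pb.bracket a b) ∈ pb.lieSpan I I * (⊤ : Submodule F P) := by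
  have hid : x * (y * pb.bracket a b)
      = x * pb.bracket (y * a) b - a * (x * pb.bracket y b) := by
    linear_combination (-x) * pb.leibniz y a b
  rw [hid]
  refine Submodule.sub_mem _ ?_ ?_
  · exact pb.key1 hI hx (hI y hy a) b
  · exact mul_mem_mulTop (pb.key1 hI hx hy b) a

lemma udelta_mul_closed : ∀ k : ℕ, ∀ x ∈ pb.udelta k, ∀ p : P, x * p ∈ pb.udelta k
  | 0 => fun _ _ _ => Submodule.mem_top
  | k + 1 => fun x hx p => by
      rw [mul_comm]
      exact mul_mem_mulTop hx p

/-- The key step: `δ̃ₖ · δ̃ₖ · δ̃₁ ⊆ δ̃ₖ₊₁`. -/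
lemma udelta_mul_mul_le (k : ℕ) :
    pb.udelta k * pb.udelta k * pb.udelta 1 ≤ pb.udelta (k + 1) := by
  rw [Submodule.mul_le]
  intro w hw v hv
  have hv1 : v ∈ pb.lieSpan ⊤ ⊤ * (⊤ : Submodule F P) := by
    simpa [PoissonBracket.udelta] using hv
  refine Submodule.mul_induction_on hv1 (fun s hs c _ => ?_) (fun u u' hu hu' => ?_)
  · -- s ∈ lieSpan ⊤ ⊤
    induction hs using Submodule.span_induction with
    | mem s hsmem =>
        obtain ⟨a, -, b, -, rfl⟩ := hsmem
        refine Submodule.mul_induction_on hw (fun x hx y hy => ?_) (fun u u' hu hu' => ?_)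
        · rw [show x * y * (pb.bracket a b * c) = c * (x * (y * pb.bracket a b)) by ring,
            PoissonBracket.udelta]
          exact mul_mem_mulTop (pb.key2 (pb.udelta_mul_closed k) hx hy a b) c
        · rw [add_mul]
          exact Submodule.add_mem _ hu hu'
    | zero => rw [zero_mul, mul_zero]; exact Submodule.zero_mem _
    | add s t _ _ hs ht =>
        rw [add_mul, mul_add]
        exact Submodule.add_mem _ hs ht
    | smul r s _ hs =>
        rw [smul_mul_assoc, mul_smul_comm]
        exact Submodule.smul_mem _ r hs
  · rw [mul_add]
    exact Submodule.add_mem _ hu hu'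

lemma udelta_pow_le : ∀ k : ℕ, pb.udelta 1 ^ (2 ^ k - 1) ≤ pb.udelta k
  | 0 => by
      rw [show 2 ^ 0 - 1 = 0 by norm_num, pow_zero]
      exact le_top
  | k + 1 => by
      have h2 : 2 ^ (k + 1) - 1 = (2 ^ k - 1) + (2 ^ k - 1) + 1 := by
        have := Nat.one_le_two_pow (n := k)
        have : 2 ^ (k + 1) = 2 ^ k + 2 ^ k := by ring
        omega
      rw [h2, pow_add, pow_add, pow_one]
      calc pb.udelta 1 ^ (2 ^ k - 1) * pb.udelta 1 ^ (2 ^ k - 1) * pb.udelta 1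
          ≤ pb.udelta k * pb.udelta k * pb.udelta 1 :=
            mul_le_mul' (mul_le_mul' (udelta_pow_le k)
              (udelta_pow_le k)) le_rfl
        _ ≤ pb.udelta (k + 1) := pb.udelta_mul_mul_le k

end Aux

end PoissonBracket

open PoissonBracket

/-- If `P` is strongly solvable with strong derived length `n`, then the Poisson ideal
`δ̃₁(P) = {P,P}P` is associative nilpotent of index at most `2^n - 1`. -/
theorem stronglySolvable_udeltaOne_nilpotent
    {F P : Type*} [Field F] [CommRing P] [Algebra F P]
    (pb : PoissonBracket F P) (n : ℕ)
    (hzero : pb.udelta n = ⊥) (hmin : ∀ m < n, pb.udelta m ≠ ⊥) :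
    pb.udelta 1 ^ (2 ^ n - 1) = ⊥ := by
  exact le_bot_iff.mp ((pb.udelta_pow_le n).trans hzero.le)
end

section
/- Let P be a Poisson algebra over a field 𝔽. Then P is strongly Lie nilpotent if and only if P is both Lie nilpotent and strongly solvable. -/
open PoissonBracket

namespace PoissonBracketAux

open PoissonBracket Submodule

variable {F P : Type*} [Field F] [CommRing P] [Algebra F P] (pb : PoissonBracket F P)

lemma bracket_zero_left (p : P) : pb.bracket 0 p = 0 := by
  have h := pb.smul_left 0 0 p; simpa using h

lemma bracket_zero_right (p : P) : pb.bracket p 0 = 0 := by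
  have h := pb.smul_right 0 p 0; simpa using h

lemma bracket_antisymm (a b : P) : pb.bracket a b = - pb.bracket b a := by
  have h := pb.alt (a + b)
  rw [pb.add_left, pb.add_right, pb.add_right, pb.alt, pb.alt] at h
  linear_combination h

lemma bracket_one_left (p : P) : pb.bracket 1 p = 0 := by
  have h := pb.leibniz 1 1 p
  simp only [one_mul] at h
  exact left_eq_add.mp h

lemma bracket_one_right (p : P) : pb.bracket p 1 = 0 := by
  rw [bracket_antisymm, bracket_one_left, neg_zero]

lemma leibniz_right (a b c : P) :
    pb.bracket a (b * c) = b * pb.bracket a c + c * pb.bracket a b := by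
  rw [bracket_antisymm pb a (b*c), pb.leibniz, bracket_antisymm pb a c,
    bracket_antisymm pb a b]
  ring

lemma bracket_mem_lieSpan {A B : Submodule F P} {a b : P} (ha : a ∈ A) (hb : b ∈ B) :
    pb.bracket a b ∈ pb.lieSpan A B :=
  Submodule.subset_span ⟨a, ha, b, hb, rfl⟩

lemma lieSpan_le {A B C : Submodule F P} :
    pb.lieSpan A B ≤ C ↔ ∀ a ∈ A, ∀ b ∈ B, pb.bracket a b ∈ C := by
  constructor
  · intro h a ha b hb; exact h (bracket_mem_lieSpan pb ha hb)
  · intro h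
    apply Submodule.span_le.2
    rintro z ⟨a, ha, b, hb, rfl⟩
    exact h a ha b hb

lemma lieSpan_mono {A A' B B' : Submodule F P} (h1 : A ≤ A') (h2 : B ≤ B') :
    pb.lieSpan A B ≤ pb.lieSpan A' B' :=
  (lieSpan_le pb).2 fun a ha b hb => bracket_mem_lieSpan pb (h1 ha) (h2 hb)


/-- Forward: `lcs ⊤ n ≤ ulps n`. -/
lemma lcs_le_ulps : ∀ n, pb.lcs ⊤ n ≤ pb.ulps n := by
  intro n
  induction n using Nat.strong_induction_on with
  | _ n ih =>
    match n with
    | 0 => exact le_rfl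
    | 1 => exact le_rfl
    | (n+2) =>
      show pb.lieSpan (pb.lcs ⊤ (n+1)) ⊤ ≤ pb.lieSpan (pb.ulps (n+1)) ⊤ * ⊤
      refine le_trans (lieSpan_mono pb (ih (n+1) (by omega)) le_rfl) ?_
      intro x hx
      simpa using Submodule.mul_mem_mul hx (Submodule.mem_top (x := (1:P)))

/-- Forward: `udelta n ≤ ulps (n+1)`. -/
lemma udelta_le_ulps : ∀ n, pb.udelta n ≤ pb.ulps (n+1) := by
  intro n
  induction n with
  | zero => exact le_rfl
  | succ n ih =>
    show pb.lieSpan (pb.udelta n) (pb.udelta n) * ⊤ ≤ pb.lieSpan (pb.ulps (n+1)) ⊤ * ⊤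
    exact mul_le_mul' (lieSpan_mono pb ih le_top) le_rfl

lemma bracket_pow_mem {Z J : Submodule F P}
    (hJmul : ∀ x ∈ J, ∀ p : P, p * x ∈ J)
    (hZ : ∀ z ∈ Z, ∀ p : P, pb.bracket z p ∈ J) :
    ∀ k, ∀ u ∈ Z ^ k, ∀ p : P, pb.bracket u p ∈ J := by
  intro k
  induction k with
  | zero =>
    intro u hu p
    rw [pow_zero] at hu
    obtain ⟨r, rfl⟩ := Submodule.mem_one.mp hu
    rw [Algebra.algebraMap_eq_smul_one, pb.smul_left, bracket_one_left pb, smul_zero]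
    exact J.zero_mem
  | succ k ih =>
    intro u hu p
    rw [pow_succ] at hu
    refine Submodule.mul_induction_on hu (fun m hm n hn => ?_) (fun x y hx hy => ?_)
    · rw [pb.leibniz]
      exact J.add_mem (hJmul _ (hZ n hn p) m) (hJmul _ (ih m hm p) n)
    · rw [pb.add_left]; exact J.add_mem hx hy

/-- J is closed under multiplication by submodules. -/
lemma mul_le_of_ideal {J : Submodule F P} (hJmul : ∀ x ∈ J, ∀ p : P, p * x ∈ J)
    (A : Submodule F P) : A * J ≤ J := by
  refine Submodule.mul_le.2 fun a _ x hx => hJmul x hx a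

lemma ideal_mul_le {J : Submodule F P} (hJmul : ∀ x ∈ J, ∀ p : P, p * x ∈ J)
    (A : Submodule F P) : J * A ≤ J := by
  refine Submodule.mul_le.2 fun x hx a _ => by rw [mul_comm]; exact hJmul x hx a

/-- Central extraction: if brackets of W land in J, then {W·A, ⊤} ≤ W·{A,⊤} ⊔ J. -/
lemma lieSpan_mul_central {W A J : Submodule F P}
    (hJmul : ∀ x ∈ J, ∀ p : P, p * x ∈ J)
    (hW : ∀ u ∈ W, ∀ p : P, pb.bracket u p ∈ J) :
    pb.lieSpan (W * A) ⊤ ≤ W * pb.lieSpan A ⊤ ⊔ J := by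
  refine (lieSpan_le pb).2 fun x hx p _ => ?_
  refine Submodule.mul_induction_on hx (fun u hu a ha => ?_) (fun y z hy hz => ?_)
  · rw [pb.leibniz]
    refine Submodule.add_mem _ (Submodule.mem_sup_left ?_) (Submodule.mem_sup_right ?_)
    · exact Submodule.mul_mem_mul hu (bracket_mem_lieSpan pb ha Submodule.mem_top)
    · exact hJmul _ (hW u hu p) a
  · rw [pb.add_left]; exact Submodule.add_mem _ hy hz

/-- If J is a Lie ideal, {A ⊔ J, B} ≤ {A,B} ⊔ J. -/
lemma lieSpan_sup_left {A B J : Submodule F P}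
    (hJlie : ∀ x ∈ J, ∀ p : P, pb.bracket x p ∈ J) :
    pb.lieSpan (A ⊔ J) B ≤ pb.lieSpan A B ⊔ J := by
  refine (lieSpan_le pb).2 fun a' ha' b hb => ?_
  obtain ⟨a, ha, j, hj, rfl⟩ := Submodule.mem_sup.mp ha'
  rw [pb.add_left]
  exact Submodule.add_mem _ (Submodule.mem_sup_left (bracket_mem_lieSpan pb ha hb))
    (Submodule.mem_sup_right (hJlie j hj b))

lemma lieSpan_sup_right {A B J : Submodule F P}
    (hJlie : ∀ x ∈ J, ∀ p : P, pb.bracket x p ∈ J) :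
    pb.lieSpan A (B ⊔ J) ≤ pb.lieSpan A B ⊔ J := by
  refine (lieSpan_le pb).2 fun a ha b' hb' => ?_
  obtain ⟨b, hb, j, hj, rfl⟩ := Submodule.mem_sup.mp hb'
  rw [pb.add_right]
  refine Submodule.add_mem _ (Submodule.mem_sup_left (bracket_mem_lieSpan pb ha hb)) ?_
  rw [bracket_antisymm]
  exact Submodule.mem_sup_right (J.neg_mem (hJlie j hj a))


/-- Key identity lemma: `Z^a · Z^a · {⊤,⊤} ≤ {Z^a·⊤, Z^a·⊤} ⊔ J`
when all brackets of `Z^a` land in the ideal `J`. -/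
lemma sq_mul_bracket_le {W J : Submodule F P}
    (hJmul : ∀ x ∈ J, ∀ p : P, p * x ∈ J)
    (hW : ∀ u ∈ W, ∀ p : P, pb.bracket u p ∈ J) :
    W * W * pb.lieSpan ⊤ ⊤ ≤ pb.lieSpan (W * ⊤) (W * ⊤) ⊔ J := by
  refine Submodule.mul_le.2 fun x hx y hy => ?_
  induction hy using Submodule.span_induction with
  | mem y hy =>
    obtain ⟨p, -, q, -, rfl⟩ := hy
    refine Submodule.mul_induction_on hx (fun u hu v hv => ?_) (fun s t hs ht => ?_)
    · -- u*v*{p,q} = {u*p, v*q} - u*q*{p,v} - p*v*{u,q} - p*q*{u,v}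
      have key : u * v * pb.bracket p q =
          pb.bracket (u*p) (v*q) - u*q*pb.bracket p v - p*v*pb.bracket u q
            - p*q*pb.bracket u v := by
        have h1 : pb.bracket (u*p) (v*q)
            = u * pb.bracket p (v*q) + p * pb.bracket u (v*q) := pb.leibniz u p (v*q)
        have h2 : pb.bracket p (v*q) = v * pb.bracket p q + q * pb.bracket p v :=
          leibniz_right pb p v q
        have h3 : pb.bracket u (v*q) = v * pb.bracket u q + q * pb.bracket u v :=
          leibniz_right pb u v q
        rw [h2, h3] at h1
        linear_combination -h1
      rw [key]
      have hpv : pb.bracket p v ∈ J := by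
        rw [bracket_antisymm]; exact J.neg_mem (hW v hv p)
      refine Submodule.sub_mem _ (Submodule.sub_mem _ (Submodule.sub_mem _
        (Submodule.mem_sup_left ?_) (Submodule.mem_sup_right ?_))
        (Submodule.mem_sup_right ?_)) (Submodule.mem_sup_right ?_)
      · exact bracket_mem_lieSpan pb (Submodule.mul_mem_mul hu Submodule.mem_top)
          (Submodule.mul_mem_mul hv Submodule.mem_top)
      · exact hJmul _ hpv (u*q)
      · exact hJmul _ (hW u hu q) (p*v)
      · exact hJmul _ (hW u hu v) (p*q)
    · rw [add_mul]; exact Submodule.add_mem _ hs ht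
  | zero => rw [mul_zero]; exact Submodule.zero_mem _
  | add y z _ _ hy hz => rw [mul_add]; exact Submodule.add_mem _ hy hz
  | smul r y _ hy => rw [mul_smul_comm]; exact Submodule.smul_mem _ r hy

/-- The mod-`J` upper Lie power series: `vS J n` corresponds to `ulps (n+1)` modulo `J`. -/
def vS (q : PoissonBracket F P) (J : Submodule F P) : ℕ → Submodule F P
  | 0 => ⊤
  | n + 1 => q.lieSpan (vS q J n) ⊤ * ⊤ ⊔ J

lemma ulps_le_vS (J : Submodule F P) : ∀ n, pb.ulps (n+1) ≤ vS pb J n := by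
  intro n
  induction n with
  | zero => exact le_rfl
  | succ n ih =>
    show pb.lieSpan (pb.ulps (n+1)) ⊤ * ⊤ ≤ _
    exact le_sup_of_le_left (mul_le_mul' (lieSpan_mono pb ih le_rfl) le_rfl)

lemma vS_mono {J J' : Submodule F P} (h : J ≤ J') : ∀ n, vS pb J n ≤ vS pb J' n := by
  intro n
  induction n with
  | zero => exact le_rfl
  | succ n ih =>
    exact sup_le (le_sup_of_le_left (mul_le_mul' (lieSpan_mono pb ih le_rfl) le_rfl))
      (le_sup_of_le_right h)

lemma lcs_le_two : ∀ k, pb.lcs ⊤ (k+2) ≤ pb.lcs ⊤ 2 := by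
  intro k
  show pb.lieSpan (pb.lcs ⊤ (k+1)) ⊤ ≤ pb.lieSpan (pb.lcs ⊤ 1) ⊤
  exact lieSpan_mono pb le_top le_rfl


lemma le_mul_top (Z : Submodule F P) : Z ≤ Z * ⊤ := by
  intro x hx
  simpa using Submodule.mul_mem_mul hx (Submodule.mem_top (x := (1 : P)))

lemma mem_mul_top_of (Z : Submodule F P) : ∀ w ∈ Z * ⊤, ∀ p : P, p * w ∈ Z * ⊤ := by
  intro w hw p
  refine Submodule.mul_induction_on hw (fun z hz t _ => ?_) (fun x y hx hy => ?_)
  · rw [mul_left_comm]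
    exact Submodule.mul_mem_mul hz Submodule.mem_top
  · rw [mul_add]; exact Submodule.add_mem _ hx hy

/-- The main induction: if the upper derived series vanishes and `γ_c ≤ J` for a
Poisson ideal `J`, then the mod-`J` upper Lie power series eventually falls into `J`. -/
lemma main_aux {d : ℕ} (hd : pb.udelta d = ⊥) :
    ∀ c (J : Submodule F P), pb.IsPoissonIdeal J → pb.lcs ⊤ c ≤ J →
      ∃ m, vS pb J m ≤ J := by
  intro c
  induction c with
  | zero => exact fun J hJ hc => ⟨0, hc⟩
  | succ c ih =>
    rcases c with _ | _ | c
    · exact fun J hJ hc => ⟨0, hc⟩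
    · -- c = 2 : lcs ⊤ 2 ≤ J
      intro J hJ hc
      refine ⟨1, ?_⟩
      show pb.lieSpan (vS pb J 0) ⊤ * ⊤ ⊔ J ≤ J
      refine sup_le ?_ le_rfl
      refine le_trans (mul_le_mul' (le_trans ?_ hc) le_rfl) (ideal_mul_le hJ.1 ⊤)
      exact le_rfl
    · -- inductive step, c+3
      intro J hJ hc
      set Z := pb.lcs ⊤ (c+2) with hZdef
      have hZbr : ∀ z ∈ Z, ∀ p : P, pb.bracket z p ∈ J := by
        intro z hz p
        exact hc (bracket_mem_lieSpan pb hz Submodule.mem_top)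
      set J' := J ⊔ Z * ⊤ with hJ'def
      have hJ'mul : ∀ x ∈ J', ∀ p : P, p * x ∈ J' := by
        intro x hx p
        obtain ⟨j, hj, w, hw, rfl⟩ := Submodule.mem_sup.mp hx
        rw [mul_add]
        exact Submodule.add_mem _ (Submodule.mem_sup_left (hJ.1 j hj p))
          (Submodule.mem_sup_right (mem_mul_top_of Z w hw p))
      have hJ'lie : ∀ x ∈ J', ∀ p : P, pb.bracket x p ∈ J' := by
        intro x hx p
        obtain ⟨j, hj, w, hw, rfl⟩ := Submodule.mem_sup.mp hx
        rw [pb.add_left]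
        refine Submodule.add_mem _ (Submodule.mem_sup_left (hJ.2 j hj p)) ?_
        refine Submodule.mul_induction_on hw (fun z hz t _ => ?_) (fun a b ha hb => ?_)
        · rw [pb.leibniz]
          refine Submodule.add_mem _ (Submodule.mem_sup_right ?_) (Submodule.mem_sup_left ?_)
          · exact Submodule.mul_mem_mul hz Submodule.mem_top
          · exact hJ.1 _ (hZbr z hz p) t
        · rw [pb.add_left]; exact Submodule.add_mem _ ha hb
      have hJ' : pb.IsPoissonIdeal J' := ⟨hJ'mul, hJ'lie⟩
      have hlcs' : pb.lcs ⊤ (c+2) ≤ J' := le_sup_of_le_right (le_mul_top Z)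
      obtain ⟨m, hm⟩ := ih J' hJ' hlcs'
      have hZk : ∀ k, ∀ u ∈ Z ^ k, ∀ p : P, pb.bracket u p ∈ J :=
        bracket_pow_mem pb hJ.1 hZbr
      -- Claim C
      have claimC : ∀ (k n : ℕ), vS pb J n ≤ Z ^ k * ⊤ ⊔ J →
          ∀ j, vS pb J (n + j) ≤ Z ^ k * vS pb J' j ⊔ J := by
        intro k n h j
        induction j with
        | zero => simpa [vS] using h
        | succ j ihj =>
          have hA : pb.lieSpan (vS pb J (n + j)) ⊤ ≤
              Z ^ k * pb.lieSpan (vS pb J' j) ⊤ ⊔ J := by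
            refine le_trans (lieSpan_mono pb ihj le_rfl) ?_
            refine le_trans (lieSpan_sup_left pb hJ.2) ?_
            exact sup_le (lieSpan_mul_central pb hJ.1 (hZk k)) le_sup_right
          show pb.lieSpan (vS pb J (n + j)) ⊤ * ⊤ ⊔ J ≤ Z ^ k * vS pb J' (j+1) ⊔ J
          refine sup_le ?_ le_sup_right
          refine le_trans (mul_le_mul' hA le_rfl) ?_
          rw [Submodule.sup_mul]
          refine sup_le ?_ (le_sup_of_le_right (ideal_mul_le hJ.1 ⊤))
          rw [mul_assoc]
          refine le_sup_of_le_left (mul_le_mul' le_rfl ?_)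
          exact le_sup_left
      -- Claim B
      have claimB : ∀ k : ℕ, ∃ n, vS pb J n ≤ Z ^ k * ⊤ ⊔ J := by
        intro k
        induction k with
        | zero => exact ⟨0, by rw [pow_zero, one_mul]; exact le_sup_left⟩
        | succ k ihk =>
          obtain ⟨n, hn⟩ := ihk
          refine ⟨n + m, ?_⟩
          refine le_trans (claimC k n hn m) ?_
          refine sup_le ?_ le_sup_right
          refine le_trans (mul_le_mul' le_rfl hm) ?_
          rw [hJ'def, Submodule.mul_sup]
          refine sup_le (le_sup_of_le_right (mul_le_of_ideal hJ.1 _)) (le_sup_of_le_left ?_)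
          rw [← mul_assoc, ← pow_succ]
      -- Claim D
      have claimD : ∀ j : ℕ, Z ^ (2 ^ j - 1) * ⊤ ≤ pb.udelta j ⊔ J := by
        intro j
        induction j with
        | zero => rw [show (2:ℕ)^0 - 1 = 0 from rfl, pow_zero, one_mul]; exact le_sup_left
        | succ j ihj =>
          have hexp : 2 ^ (j+1) - 1 = (2 ^ j - 1) + (2 ^ j - 1) + 1 := by
            have h1 : 1 ≤ 2 ^ j := Nat.one_le_two_pow
            omega
          rw [hexp, pow_add, pow_add, pow_one]
          have hZ2 : Z ≤ pb.lieSpan ⊤ ⊤ := lcs_le_two pb c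
          have step1 : Z ^ (2^j-1) * Z ^ (2^j-1) * Z * ⊤ ≤
              (pb.lieSpan (Z ^ (2^j-1) * ⊤) (Z ^ (2^j-1) * ⊤) ⊔ J) * ⊤ := by
            refine mul_le_mul' ?_ le_rfl
            refine le_trans (mul_le_mul' le_rfl hZ2) ?_
            exact sq_mul_bracket_le pb hJ.1 (hZk (2^j-1))
          refine le_trans step1 ?_
          rw [Submodule.sup_mul]
          refine sup_le ?_ (le_sup_of_le_right (ideal_mul_le hJ.1 ⊤))
          have h2 : pb.lieSpan (Z ^ (2^j-1) * ⊤) (Z ^ (2^j-1) * ⊤) ≤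
              pb.lieSpan (pb.udelta j) (pb.udelta j) ⊔ J := by
            refine le_trans (lieSpan_mono pb ihj ihj) ?_
            refine le_trans (lieSpan_sup_left pb hJ.2) ?_
            exact sup_le (lieSpan_sup_right pb hJ.2) le_sup_right
          refine le_trans (mul_le_mul' h2 le_rfl) ?_
          rw [Submodule.sup_mul]
          exact sup_le le_sup_left (le_sup_of_le_right (ideal_mul_le hJ.1 ⊤))
      obtain ⟨n, hn⟩ := claimB (2 ^ d - 1)
      refine ⟨n, le_trans hn ?_⟩
      refine sup_le ?_ le_rfl
      refine le_trans (claimD d) ?_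
      rw [hd]
      simp

end PoissonBracketAux

open PoissonBracketAux

/-- `P` is strongly Lie nilpotent iff `P` is Lie nilpotent and strongly solvable. -/
theorem stronglyLieNilpotent_iff_lieNilpotent_and_stronglySolvable
    {F P : Type*} [Field F] [CommRing P] [Algebra F P]
    (pb : PoissonBracket F P) :
    (∃ c : ℕ, pb.ulps (c + 1) = ⊥) ↔
      ((∃ c : ℕ, pb.lcs ⊤ c = ⊥) ∧ (∃ n : ℕ, pb.udelta n = ⊥)) := by
  constructor
  · rintro ⟨c, hc⟩
    exact ⟨⟨c+1, le_bot_iff.mp (hc ▸ lcs_le_ulps pb (c+1))⟩,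
      ⟨c, le_bot_iff.mp (hc ▸ udelta_le_ulps pb c)⟩⟩
  · rintro ⟨⟨c, hc⟩, ⟨d, hd⟩⟩
    have hbot : pb.IsPoissonIdeal (⊥ : Submodule F P) := by
      constructor
      · intro x hx p; rw [Submodule.mem_bot] at hx ⊢; rw [hx, mul_zero]
      · intro x hx p; rw [Submodule.mem_bot] at hx ⊢; rw [hx, bracket_zero_left]
    obtain ⟨m, hm⟩ := main_aux pb hd c ⊥ hbot (le_of_eq hc)
    exact ⟨m, le_bot_iff.mp (le_trans (ulps_le_vS pb ⊥ m) hm)⟩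
end

section
/- Let P be a Poisson algebra over a field 𝔽 and let I be a Poisson ideal of P. Then for all a, b, c ∈ I and every positive integer m, ({{a,b},c} − {{b,c},a})·γₘ(I) ⊆ γ_{m+1}(I)·P, i.e. ({{a,b},c} − {{b,c},a})·z ∈ γ_{m+1}(I)·P for every z ∈ γₘ(I). -/
section Aux

namespace PoissonBracket

variable {F P : Type*} [Field F] [CommRing P] [Algebra F P]

lemma bracket_zero_right (pb : PoissonBracket F P) (a : P) : pb.bracket a 0 = 0 := by
  have h := pb.smul_right (0 : F) a 0
  simpa using h

lemma skew (pb : PoissonBracket F P) (a b : P) : pb.bracket a b = - pb.bracket b a := by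
  have h := pb.alt (a + b)
  rw [pb.add_left, pb.add_right, pb.add_right, pb.alt, pb.alt] at h
  linear_combination h

lemma mem_lieSpan (pb : PoissonBracket F P) {A B : Submodule F P} {a b : P}
    (ha : a ∈ A) (hb : b ∈ B) : pb.bracket a b ∈ pb.lieSpan A B :=
  Submodule.subset_span ⟨a, ha, b, hb, rfl⟩

lemma lcs_succ_eq (pb : PoissonBracket F P) (I : Submodule F P) {k : ℕ} (hk : 1 ≤ k) :
    pb.lcs I (k + 1) = pb.lieSpan (pb.lcs I k) I := by
  cases k with
  | zero => omega
  | succ n => rfl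

lemma mem_lcs_succ (pb : PoissonBracket F P) (I : Submodule F P) {k : ℕ} (hk : 1 ≤ k)
    {u x : P} (hu : u ∈ pb.lcs I k) (hx : x ∈ I) : pb.bracket u x ∈ pb.lcs I (k + 1) := by
  rw [pb.lcs_succ_eq I hk]
  exact pb.mem_lieSpan hu hx

lemma lie_lcs_lcs (pb : PoissonBracket F P) (I : Submodule F P) :
    ∀ j, 1 ≤ j → ∀ i, 1 ≤ i → ∀ u ∈ pb.lcs I i, ∀ v ∈ pb.lcs I j,
      pb.bracket u v ∈ pb.lcs I (i + j) := by
  intro j hj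
  induction j, hj using Nat.le_induction with
  | base =>
    intro i hi u hu v hv
    exact pb.mem_lcs_succ I hi hu hv
  | succ j hj ih =>
    intro i hi u hu v hv
    rw [pb.lcs_succ_eq I hj] at hv
    induction hv using Submodule.span_induction with
    | mem v hv =>
      obtain ⟨w, hw, x, hx, rfl⟩ := hv
      have hident : pb.bracket u (pb.bracket w x)
          = pb.bracket (pb.bracket u w) x + pb.bracket (pb.bracket x u) w := by
        have h1 := pb.jacobi u w x
        have h2 := pb.skew u (pb.bracket w x)
        linear_combination h2 - h1
      rw [hident]
      apply add_mem
      · have h3 := pb.mem_lcs_succ I (k := i + j) (by omega)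
          (ih i hi u hu w hw) hx
        have e : i + j + 1 = i + (j + 1) := by omega
        rwa [e] at h3
      · have hxu : pb.bracket x u ∈ pb.lcs I (i + 1) := by
          rw [pb.skew x u]
          exact neg_mem (pb.mem_lcs_succ I hi hu hx)
        have h4 := ih (i + 1) (by omega) _ hxu w hw
        have e : i + 1 + j = i + (j + 1) := by omega
        rwa [e] at h4
    | zero =>
      rw [pb.bracket_zero_right]
      exact zero_mem _
    | add y z hy hz ihy ihz =>
      rw [pb.add_right]
      exact add_mem ihy ihz
    | smul r y hy ihy =>
      rw [pb.smul_right]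
      exact Submodule.smul_mem _ _ ihy

lemma mem_mul_top {M : Submodule F P} {s : P} (hs : s ∈ M) : s ∈ M * ⊤ := by
  rw [← mul_one s]
  exact Submodule.mul_mem_mul hs Submodule.mem_top

lemma mul_top_mem_right {M : Submodule F P} {s : P} (hs : s ∈ M) (p : P) : p * s ∈ M * ⊤ := by
  rw [mul_comm p s]
  exact Submodule.mul_mem_mul hs Submodule.mem_top

lemma key (pb : PoissonBracket F P) (I : Submodule F P) (hI : pb.IsPoissonIdeal I)
    {k : ℕ} (hk : 1 ≤ k) {x y c w : P} (hx : x ∈ I) (hy : y ∈ I) (hc : c ∈ I)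
    (hw : w ∈ pb.lcs I k) (hyw : pb.bracket y w ∈ pb.lcs I (k + 2)) :
    pb.bracket y c * pb.bracket w x ∈ pb.lcs I (k + 2) * ⊤ := by
  have hxy : x * y ∈ I := hI.1 y hy x
  have h2 : pb.bracket (x * y) c ∈ pb.lcs I 2 := pb.mem_lieSpan hxy hc
  have hE : pb.bracket (pb.bracket (x * y) c) w ∈ pb.lcs I (k + 2) := by
    have h := pb.lie_lcs_lcs I k hk 2 (by omega) _ h2 w hw
    have e : 2 + k = k + 2 := by omega
    rwa [e] at h
  have hycw : pb.bracket (pb.bracket y c) w ∈ pb.lcs I (k + 2) := by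
    have h := pb.lie_lcs_lcs I k hk 2 (by omega) _ (pb.mem_lieSpan hy hc) w hw
    have e : 2 + k = k + 2 := by omega
    rwa [e] at h
  have hxcw : pb.bracket (pb.bracket x c) w ∈ pb.lcs I (k + 2) := by
    have h := pb.lie_lcs_lcs I k hk 2 (by omega) _ (pb.mem_lieSpan hx hc) w hw
    have e : 2 + k = k + 2 := by omega
    rwa [e] at h
  have hident : pb.bracket y c * pb.bracket x w
      = pb.bracket (pb.bracket (x * y) c) w - x * pb.bracket (pb.bracket y c) w
        - y * pb.bracket (pb.bracket x c) w - pb.bracket x c * pb.bracket y w := by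
    have h1 := pb.leibniz x y c
    have h5 := congrArg (fun t => pb.bracket t w) h1
    beta_reduce at h5
    have h2' := pb.add_left (x * pb.bracket y c) (y * pb.bracket x c) w
    have h3 := pb.leibniz x (pb.bracket y c) w
    have h4 := pb.leibniz y (pb.bracket x c) w
    linear_combination -h5 - h2' - h3 - h4
  have hmem : pb.bracket y c * pb.bracket x w ∈ pb.lcs I (k + 2) * ⊤ := by
    rw [hident]
    refine sub_mem (sub_mem (sub_mem ?_ ?_) ?_) ?_
    · exact mem_mul_top hE
    · exact mul_top_mem_right hycw x
    · exact mul_top_mem_right hxcw y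
    · exact mul_top_mem_right hyw (pb.bracket x c)
  rw [pb.skew w x, mul_neg]
  exact neg_mem hmem

end PoissonBracket

end Aux

open PoissonBracket

/-- For a Poisson ideal `I` and `a, b, c ∈ I`,
`({{a,b},c} - {{b,c},a})·γₘ(I) ⊆ γ_{m+1}(I)·P` for every positive integer `m`. -/
theorem bracket_skew_mul_lcs_mem
    {F P : Type*} [Field F] [CommRing P] [Algebra F P]
    (pb : PoissonBracket F P) (I : Submodule F P) (hI : pb.IsPoissonIdeal I)
    (a b c : P) (ha : a ∈ I) (hb : b ∈ I) (hc : c ∈ I)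
    (m : ℕ) (hm : 1 ≤ m) :
    ∀ z ∈ pb.lcs I m,
      (pb.bracket (pb.bracket a b) c - pb.bracket (pb.bracket b c) a) * z ∈
        pb.lcs I (m + 1) * ⊤ := by
  intro z hz
  have hab : pb.bracket a b ∈ I := hI.2 a ha b
  have hbc : pb.bracket b c ∈ I := hI.2 b hb c
  have habc : pb.bracket (pb.bracket a b) c ∈ pb.lcs I 2 := pb.mem_lieSpan hab hc
  have hbca : pb.bracket (pb.bracket b c) a ∈ pb.lcs I 2 := pb.mem_lieSpan hbc ha
  obtain _ | m := m
  · omega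
  obtain _ | n := m
  · exact Submodule.mul_mem_mul (sub_mem habc hbca) Submodule.mem_top
  · -- m = n + 2
    have hz' : z ∈ Submodule.span F
        {zz : P | ∃ a' ∈ pb.lcs I (n + 1), ∃ b' ∈ I, zz = pb.bracket a' b'} := hz
    clear hz
    induction hz' using Submodule.span_induction with
    | mem v hv =>
      obtain ⟨w, hw, x, hx, rfl⟩ := hv
      have hyw1 : pb.bracket (pb.bracket a b) w ∈ pb.lcs I (n + 1 + 2) := by
        have h := pb.lie_lcs_lcs I (n + 1) (by omega) 2 (by omega) _
          (pb.mem_lieSpan ha hb) w hw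
        have e : 2 + (n + 1) = n + 1 + 2 := by omega
        rwa [e] at h
      have hyw2 : pb.bracket (pb.bracket b c) w ∈ pb.lcs I (n + 1 + 2) := by
        have h := pb.lie_lcs_lcs I (n + 1) (by omega) 2 (by omega) _
          (pb.mem_lieSpan hb hc) w hw
        have e : 2 + (n + 1) = n + 1 + 2 := by omega
        rwa [e] at h
      have t1 : pb.bracket (pb.bracket a b) c * pb.bracket w x ∈
          pb.lcs I (n + 1 + 2) * ⊤ :=
        pb.key I hI (by omega) hx hab hc hw hyw1
      have t2 : pb.bracket (pb.bracket b c) a * pb.bracket w x ∈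
          pb.lcs I (n + 1 + 2) * ⊤ :=
        pb.key I hI (by omega) hx hbc ha hw hyw2
      rw [sub_mul]
      exact sub_mem t1 t2
    | zero =>
      rw [mul_zero]
      exact zero_mem _
    | add y' z' hy' hz' ihy ihz =>
      rw [mul_add]
      exact add_mem ihy ihz
    | smul r y' hy' ihy =>
      rw [mul_smul_comm]
      exact Submodule.smul_mem _ _ ihy
end

section
/- Let P be a Poisson algebra over a field 𝔽 and let 𝒥 be the Poisson ideal of P generated by all elements {{{x₁,x₂},{x₃,x₄}},x₅} with x₁,…,x₅ ∈ P. Then for all x₁, x₂, x₃, x₄ ∈ P one has 4·{{x₁,x₂},{x₃,x₄}}³ ∈ 𝒥. -/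
namespace PoissonBracket

variable {F P : Type*} [Field F] [CommRing P] [Algebra F P]

lemma zero_left' (pb : PoissonBracket F P) (b : P) : pb.bracket 0 b = 0 := by
  have := pb.add_left 0 0 b
  simpa using this.symm

lemma zero_right' (pb : PoissonBracket F P) (b : P) : pb.bracket b 0 = 0 := by
  have := pb.add_right b 0 0
  simpa using this.symm

lemma antisymm' (pb : PoissonBracket F P) (a b : P) :
    pb.bracket b a = -pb.bracket a b := by
  have h := pb.alt (a + b)
  rw [pb.add_left, pb.add_right, pb.add_right, pb.alt, pb.alt] at h
  linear_combination h

lemma leibniz_right' (pb : PoissonBracket F P) (a b c : P) :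
    pb.bracket a (b * c) = b * pb.bracket a c + c * pb.bracket a b := by
  have h1 := pb.leibniz b c a
  have h2 := antisymm' pb a (b * c)
  have h3 := antisymm' pb a c
  have h4 := antisymm' pb a b
  linear_combination -h1 + h2 - b * h3 - c * h4

lemma key_identity (pb : PoissonBracket F P) (a b : P) :
    pb.bracket (pb.bracket (pb.bracket (a * a) (a * b)) b) b
      = (2 * (a * a)) * pb.bracket (pb.bracket (pb.bracket a b) b) b
        + (12 * (a * pb.bracket a b)) * pb.bracket (pb.bracket a b) b
        + 4 * (pb.bracket a b) ^ 3 := by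
  simp only [pb.leibniz, leibniz_right' pb, pb.add_left, pb.add_right, pb.alt,
    zero_left' pb, zero_right' pb, mul_zero, zero_mul, add_zero, zero_add]
  ring

end PoissonBracket

open PoissonBracket

/-- `4·{{x₁,x₂},{x₃,x₄}}³` lies in the Poisson ideal generated by all elements
`{{{y₁,y₂},{y₃,y₄}},y₅}`. -/
theorem four_smul_bracket_cube_mem_poissonSpan
    {F P : Type*} [Field F] [CommRing P] [Algebra F P]
    (pb : PoissonBracket F P) (x1 x2 x3 x4 : P) :
    4 • (pb.bracket (pb.bracket x1 x2) (pb.bracket x3 x4)) ^ 3 ∈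
      pb.poissonSpan {z : P | ∃ y1 y2 y3 y4 y5 : P,
        z = pb.bracket (pb.bracket (pb.bracket y1 y2) (pb.bracket y3 y4)) y5} := by

  set S : Set P := {z : P | ∃ y1 y2 y3 y4 y5 : P,
      z = pb.bracket (pb.bracket (pb.bracket y1 y2) (pb.bracket y3 y4)) y5} with hS
  have hSmem : ∀ z ∈ S, z ∈ pb.poissonSpan S := fun z hz =>
    Submodule.mem_sInf.2 fun I hI => hI.2 hz
  have hmul : ∀ x ∈ pb.poissonSpan S, ∀ p : P, p * x ∈ pb.poissonSpan S := fun x hx p =>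
    Submodule.mem_sInf.2 fun I hI => hI.1.1 x (Submodule.mem_sInf.1 hx I hI) p
  have hbr : ∀ x ∈ pb.poissonSpan S, ∀ p : P, pb.bracket x p ∈ pb.poissonSpan S :=
    fun x hx p => Submodule.mem_sInf.2 fun I hI => hI.1.2 x (Submodule.mem_sInf.1 hx I hI) p
  set a := pb.bracket x1 x2 with ha
  set b := pb.bracket x3 x4 with hb
  set h := pb.bracket a b with hh
  set k := pb.bracket h b with hk
  set m := pb.bracket k b with hm
  have hGmem : pb.bracket (pb.bracket (pb.bracket (a * a) (a * b)) b) b ∈ pb.poissonSpan S := by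
    refine hSmem _ ?_
    exact ⟨a * a, a * b, x3, x4, b, rfl⟩
  have hkmem : k ∈ pb.poissonSpan S := hSmem _ ⟨x1, x2, x3, x4, b, rfl⟩
  have hmmem : m ∈ pb.poissonSpan S := hbr k hkmem b
  have hkey := key_identity pb a b
  rw [← hh, ← hk, ← hm] at hkey
  have heq : 4 • h ^ 3
      = pb.bracket (pb.bracket (pb.bracket (a * a) (a * b)) b) b
        - (2 * (a * a)) * m - (12 * (a * h)) * k := by
    rw [nsmul_eq_mul]
    push_cast
    linear_combination -hkey
  rw [heq]
  exact Submodule.sub_mem _ (Submodule.sub_mem _ hGmem (hmul m hmmem _)) (hmul k hkmem _)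
end

section
/- Let P be a reduced Poisson algebra over a field 𝔽 (P has no nonzero nilpotent elements). Then P is Lie nilpotent if and only if P is abelian, i.e. {P,P} = 0. -/
open PoissonBracket

section Aux

variable {F P : Type*} [Field F] [CommRing P] [Algebra F P]

private lemma pb_antisymm (pb : PoissonBracket F P) (x y : P) :
    pb.bracket y x = - pb.bracket x y := by
  have h := pb.alt (x + y)
  rw [pb.add_left, pb.add_right, pb.add_right, pb.alt, pb.alt] at h
  linear_combination h

private lemma pb_mem_lieSpan (pb : PoissonBracket F P) {A B : Submodule F P} {a b : P}
    (ha : a ∈ A) (hb : b ∈ B) : pb.bracket a b ∈ pb.lieSpan A B :=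
  Submodule.subset_span ⟨a, ha, b, hb, rfl⟩

/-- Key step: if `γ_{n+3} = 0` then `γ_{n+2} = 0`, in a reduced Poisson algebra. -/
private lemma pb_step [IsReduced P] (pb : PoissonBracket F P) (n : ℕ)
    (h : pb.lcs ⊤ (n + 3) = ⊥) : pb.lcs ⊤ (n + 2) = ⊥ := by
  have hdef2 : pb.lcs ⊤ (n + 2) = pb.lieSpan (pb.lcs ⊤ (n + 1)) ⊤ := rfl
  have hdef3 : pb.lcs ⊤ (n + 3) = pb.lieSpan (pb.lcs ⊤ (n + 2)) ⊤ := rfl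
  rw [hdef2]
  apply Submodule.span_eq_bot.mpr
  rintro z ⟨v, hv, y, -, rfl⟩
  set u := pb.bracket v y with hu
  -- `v * u = pb.bracket v (v * y)` by Leibniz and antisymmetry
  have hvu : v * u = pb.bracket v (v * y) := by
    rw [pb_antisymm pb (v * y) v, pb.leibniz, pb_antisymm pb v y, pb.alt]
    ring
  -- hence `v * u ∈ γ_{n+2}`
  have hvu_mem : v * u ∈ pb.lcs ⊤ (n + 2) := by
    rw [hvu, hdef2]; exact pb_mem_lieSpan pb hv trivial
  have hu_mem : u ∈ pb.lcs ⊤ (n + 2) := by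
    rw [hdef2]; exact pb_mem_lieSpan pb hv trivial
  -- brackets of `γ_{n+2}` elements with anything vanish
  have h1 : pb.bracket (v * u) y = 0 := by
    have : pb.bracket (v * u) y ∈ pb.lcs ⊤ (n + 3) := by
      rw [hdef3]; exact pb_mem_lieSpan pb hvu_mem trivial
    rwa [h, Submodule.mem_bot] at this
  have h2 : pb.bracket u y = 0 := by
    have : pb.bracket u y ∈ pb.lcs ⊤ (n + 3) := by
      rw [hdef3]; exact pb_mem_lieSpan pb hu_mem trivial
    rwa [h, Submodule.mem_bot] at this
  -- Leibniz: `0 = {v*u, y} = v*{u,y} + u*{v,y} = u^2`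
  have hsq : u * u = 0 := by
    have := pb.leibniz v u y
    rw [h1, h2] at this
    linear_combination -this
  have : IsNilpotent u := ⟨2, by rw [pow_two]; exact hsq⟩
  exact this.eq_zero

private lemma pb_down [IsReduced P] (pb : PoissonBracket F P) :
    ∀ n : ℕ, pb.lcs ⊤ (n + 2) = ⊥ → pb.lcs ⊤ 2 = ⊥ := by
  intro n
  induction n with
  | zero => exact fun h => h
  | succ n ih => exact fun h => ih (pb_step pb n h)

end Aux

/-- A reduced Poisson algebra is Lie nilpotent iff it is abelian. -/
theorem reduced_lieNilpotent_iff_abelian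
    {F P : Type*} [Field F] [CommRing P] [Algebra F P] [IsReduced P]
    (pb : PoissonBracket F P) :
    (∃ c : ℕ, pb.lcs ⊤ c = ⊥) ↔ ∀ x y : P, pb.bracket x y = 0 := by
  constructor
  · rintro ⟨c, hc⟩ x y
    match c, hc with
    | 0, hc =>
      have : pb.bracket x y ∈ (⊤ : Submodule F P) := trivial
      rw [show pb.lcs ⊤ 0 = (⊤ : Submodule F P) from rfl] at hc
      rw [hc] at this
      exact (Submodule.mem_bot F).mp this
    | 1, hc =>
      have : pb.bracket x y ∈ (⊤ : Submodule F P) := trivial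
      rw [show pb.lcs ⊤ 1 = (⊤ : Submodule F P) from rfl] at hc
      rw [hc] at this
      exact (Submodule.mem_bot F).mp this
    | (n + 2), hc =>
      have h2 : pb.lcs ⊤ 2 = ⊥ := pb_down pb n hc
      have hmem : pb.bracket x y ∈ pb.lcs ⊤ 2 := by
        rw [show pb.lcs ⊤ 2 = pb.lieSpan (pb.lcs ⊤ 1) ⊤ from rfl]
        exact pb_mem_lieSpan pb trivial trivial
      rw [h2] at hmem
      exact (Submodule.mem_bot F).mp hmem
  · intro h
    refine ⟨2, ?_⟩
    rw [show pb.lcs ⊤ 2 = pb.lieSpan (pb.lcs ⊤ 1) ⊤ from rfl]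
    apply Submodule.span_eq_bot.mpr
    rintro z ⟨a, -, b, -, rfl⟩
    exact h a b
end

section
/- Let P be a Poisson algebra over a field 𝔽 and let I be a Lie ideal of P. Then {I², P} ⊆ I, i.e. for all x₁, x₂ ∈ I and x₃ ∈ P one has {x₁·x₂, x₃} ∈ I. -/
open PoissonBracket

/-- For a Lie ideal `I` of a Poisson algebra `P`, `{I², P} ⊆ I`. -/
theorem lieSpan_sq_top_le
    {F P : Type*} [Field F] [CommRing P] [Algebra F P]
    (pb : PoissonBracket F P) (I : Submodule F P)
    (hI : ∀ x ∈ I, ∀ p : P, pb.bracket x p ∈ I) :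
    pb.lieSpan (I * I) ⊤ ≤ I := by
  have antisymm : ∀ a b : P, pb.bracket a b = -pb.bracket b a := by
    intro a b
    have h := pb.alt (a + b)
    rw [pb.add_left, pb.add_right, pb.add_right, pb.alt, pb.alt] at h
    linear_combination h
  unfold PoissonBracket.lieSpan
  rw [Submodule.span_le]
  rintro z ⟨a, ha, b, -, rfl⟩
  refine Submodule.mul_induction_on ha (fun x hx y hy => ?_) (fun u v hu hv => ?_)
  · have key : pb.bracket (x * y) b = pb.bracket x (y * b) + pb.bracket y (x * b) := by
      rw [antisymm x (y*b), antisymm y (x*b), pb.leibniz, pb.leibniz, pb.leibniz,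
        antisymm b x, antisymm b y, antisymm y x]
      ring
    rw [key]
    exact I.add_mem (hI x hx (y * b)) (hI y hy (x * b))
  · rw [pb.add_left]
    exact I.add_mem hu hv
end

section
/- Let P be a Poisson algebra over a field 𝔽 and let A, B, C be Lie ideals of P such that {P, B} ⊆ A. Then {P, C}·{A, B} ⊆ {A, C}·P; that is, for all x₁ ∈ P, x₂ ∈ A, x₃ ∈ B, x₄ ∈ C, the product {x₁,x₄}·{x₂,x₃} lies in the span of products of elements of {A,C} with elements of P. -/
open PoissonBracket

/-- Let `A, B, C` be Lie ideals of `P` with `{P, B} ⊆ A`. Then `{P,C}·{A,B} ⊆ {A,C}·P`: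
for `x₁ ∈ P`, `x₂ ∈ A`, `x₃ ∈ B`, `x₄ ∈ C`, the product `{x₁,x₄}·{x₂,x₃}` lies in
`{A,C}·P`. -/
theorem bracket_PC_mul_bracket_AB_mem
    {F P : Type*} [Field F] [CommRing P] [Algebra F P]
    (pb : PoissonBracket F P) (A B C : Submodule F P)
    (hA : ∀ x ∈ A, ∀ p : P, pb.bracket x p ∈ A)
    (hB : ∀ x ∈ B, ∀ p : P, pb.bracket x p ∈ B)
    (hC : ∀ x ∈ C, ∀ p : P, pb.bracket x p ∈ C)
    (hBA : ∀ x ∈ B, ∀ p : P, pb.bracket p x ∈ A) :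
    ∀ x1 : P, ∀ x2 ∈ A, ∀ x3 ∈ B, ∀ x4 ∈ C,
      pb.bracket x1 x4 * pb.bracket x2 x3 ∈ pb.lieSpan A C * ⊤ := by
  intro x1 x2 hx2 x3 hx3 x4 hx4
  have key : pb.bracket x1 x4 * pb.bracket x2 x3 =
      pb.bracket (pb.bracket (x1 * x2) x3) x4
        - x1 * pb.bracket (pb.bracket x2 x3) x4
        - x2 * pb.bracket (pb.bracket x1 x3) x4
        - pb.bracket x1 x3 * pb.bracket x2 x4 := by
    rw [pb.leibniz x1 x2 x3, pb.add_left, pb.leibniz, pb.leibniz]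
    ring
  have hspan : ∀ a ∈ A, ∀ c ∈ C, pb.bracket a c ∈ pb.lieSpan A C := fun a ha c hc =>
    Submodule.subset_span ⟨a, ha, c, hc, rfl⟩
  have hmul : ∀ z ∈ pb.lieSpan A C, ∀ p : P, z * p ∈ pb.lieSpan A C * ⊤ := fun z hz p =>
    Submodule.mul_mem_mul hz Submodule.mem_top
  rw [key]
  refine Submodule.sub_mem _ (Submodule.sub_mem _ (Submodule.sub_mem _ ?_ ?_) ?_) ?_
  · simpa using hmul _ (hspan _ (hBA x3 hx3 (x1 * x2)) _ hx4) 1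
  · rw [mul_comm x1 _]
    exact hmul _ (hspan _ (hA x2 hx2 x3) _ hx4) x1
  · rw [mul_comm x2 _]
    exact hmul _ (hspan _ (hBA x3 hx3 x1) _ hx4) x2
  · rw [mul_comm (pb.bracket x1 x3) _]
    exact hmul _ (hspan x2 hx2 x4 hx4) (pb.bracket x1 x3)
end

section
/- Let P be a Poisson algebra over a field 𝔽. Then for all x, y ∈ P, the eighth power {x,y}⁸ lies in δ₂(P)·P, the span of products of elements of the second derived subalgebra δ₂(P) = {{P,P},{P,P}} with elements of P. -/
open PoissonBracket

/-- For all `x, y ∈ P`, `{x,y}⁸ ∈ δ₂(P)·P`. -/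
theorem bracket_pow_eight_mem_dseries_two_mul_top
    {F P : Type*} [Field F] [CommRing P] [Algebra F P]
    (pb : PoissonBracket F P) (x y : P) :
    pb.bracket x y ^ 8 ∈ pb.dseries ⊤ 2 * (⊤ : Submodule F P) := by
  -- skew-symmetry
  have hsk : ∀ a b : P, pb.bracket a b = - pb.bracket b a := by
    intro a b
    have h := pb.alt (a + b)
    rw [pb.add_left, pb.add_right, pb.add_right, pb.alt, pb.alt] at h
    linear_combination h
  -- Leibniz on the right
  have hlr : ∀ a b c : P, pb.bracket a (b * c) = b * pb.bracket a c + c * pb.bracket a b := by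
    intro a b c
    linear_combination hsk a (b * c) - pb.leibniz b c a - b * hsk a c - c * hsk a b
  set u := pb.bracket x y with hu
  set A := pb.bracket x u with hA
  set B := pb.bracket y u with hB
  -- membership in the first derived term
  have hD1 : ∀ a b : P, pb.bracket a b ∈ pb.dseries ⊤ 1 := by
    intro a b
    exact Submodule.subset_span ⟨a, Submodule.mem_top, b, Submodule.mem_top, rfl⟩
  have hD2 : ∀ a b c d : P,
      pb.bracket (pb.bracket a b) (pb.bracket c d) ∈ pb.dseries ⊤ 2 := by
    intro a b c d
    exact Submodule.subset_span ⟨pb.bracket a b, hD1 a b, pb.bracket c d, hD1 c d, rfl⟩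
  set M := pb.dseries ⊤ 2 * (⊤ : Submodule F P) with hM
  have hDM : ∀ d : P, d ∈ pb.dseries ⊤ 2 → d ∈ M := by
    intro d hd
    have h := Submodule.mul_mem_mul hd (Submodule.mem_top (x := (1 : P)) (R := F))
    rwa [mul_one] at h
  have hmul : ∀ p m : P, m ∈ M → p * m ∈ M := by
    intro p m hm
    refine Submodule.mul_induction_on hm (fun d hd t _ => ?_) (fun a b ha hb => ?_)
    · have h : d * (p * t) ∈ M := Submodule.mul_mem_mul hd Submodule.mem_top
      rwa [show p * (d * t) = d * (p * t) by ring]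
    · rw [mul_add]; exact add_mem ha hb
  -- basic bracket identities
  have ex : pb.bracket x (x * y) = x * u := by
    linear_combination hlr x x y + y * pb.alt x
  have ey : pb.bracket (x * y) y = y * u := by
    linear_combination pb.leibniz x y y + x * pb.alt y
  have exA : pb.bracket x (x * u) = x * A := by
    linear_combination hlr x x u + u * pb.alt x
  have exAB : pb.bracket x (y * u) = y * A + u * u := by
    linear_combination hlr x y u
  have exB : pb.bracket y (y * u) = y * B := by
    linear_combination hlr y y u + u * pb.alt y
  -- the main expansion identity
  have e1 : pb.bracket (x * u) (y * u) = -(x * u * B) + y * u * A + u ^ 3 := by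
    linear_combination pb.leibniz x u (y * u) + x * hlr u y u + u * hlr x y u +
      x * y * pb.alt u + x * u * hsk u y
  -- A², AB, B² are in M
  have eAA : A * A = -(pb.bracket u (pb.bracket x (x * u))) - x * pb.bracket A u := by
    rw [exA]
    linear_combination hlr u x A + x * hsk u A + A * hsk u x
  have eAB : A * B = -(pb.bracket u (pb.bracket x (y * u))) - y * pb.bracket A u := by
    rw [exAB]
    linear_combination pb.add_right u (y * A) (u * u) + hlr u y A + hlr u u u +
      2 * u * pb.alt u + y * hsk u A + A * hsk u y
  have eBB : B * B = -(pb.bracket u (pb.bracket y (y * u))) - y * pb.bracket B u := by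
    rw [exB]
    linear_combination hlr u y B + y * hsk u B + B * hsk u y
  have hAu : pb.bracket A u ∈ pb.dseries ⊤ 2 := by
    have h := hD2 x u x y; rw [← hu] at h; exact h
  have hBu : pb.bracket B u ∈ pb.dseries ⊤ 2 := by
    have h := hD2 y u x y; rw [← hu] at h; exact h
  have huxA : pb.bracket u (pb.bracket x (x * u)) ∈ pb.dseries ⊤ 2 := by
    have h := hD2 x y x (x * u); rw [← hu] at h; exact h
  have huyA : pb.bracket u (pb.bracket x (y * u)) ∈ pb.dseries ⊤ 2 := by
    have h := hD2 x y x (y * u); rw [← hu] at h; exact h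
  have huyB : pb.bracket u (pb.bracket y (y * u)) ∈ pb.dseries ⊤ 2 := by
    have h := hD2 x y y (y * u); rw [← hu] at h; exact h
  have hAAM : A * A ∈ M := by
    rw [eAA]
    exact sub_mem (neg_mem (hDM _ huxA)) (hmul x _ (hDM _ hAu))
  have hABM : A * B ∈ M := by
    rw [eAB]
    exact sub_mem (neg_mem (hDM _ huyA)) (hmul y _ (hDM _ hAu))
  have hBBM : B * B ∈ M := by
    rw [eBB]
    exact sub_mem (neg_mem (hDM _ huyB)) (hmul y _ (hDM _ hBu))
  -- d0 = {xu, yu} is in the second derived term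
  have hd0 : pb.bracket (x * u) (y * u) ∈ pb.dseries ⊤ 2 := by
    refine Submodule.subset_span ⟨x * u, ?_, y * u, ?_, rfl⟩
    · exact ex ▸ hD1 x (x * y)
    · exact ey ▸ hD1 (x * y) y
  -- final decomposition of u^8
  have efin : u ^ 8 =
      (u ^ 2 * (pb.bracket (x * u) (y * u) + 2 * (x * u * B - y * u * A))) *
        pb.bracket (x * u) (y * u)
      + (x ^ 2 * u ^ 4) * (B * B) + (-(2 * x * y * u ^ 4)) * (A * B)
      + (y ^ 2 * u ^ 4) * (A * A) := by
    linear_combination (-(u ^ 2) * (pb.bracket (x * u) (y * u) + u ^ 3 +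
      (x * u * B - y * u * A))) * e1
  rw [efin]
  exact add_mem (add_mem (add_mem (hmul _ _ (hDM _ hd0)) (hmul _ _ hBBM))
    (hmul _ _ hABM)) (hmul _ _ hAAM)
end
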